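/- Let Ω ⊆ ℝ^p × ℝ be open and connected, and F : Ω → ℝ real-analytic. Fix a polynomial Q with integer coefficients in n+2 variables, and let Ω'(Q) be the set of u such that Q(v, F(u,v), ∂_v F(u,v), ..., ∂_v^n F(u,v)) = 0 for all v with (u,v) ∈ Ω. If Ω'(Q) has positive Lebesgue measure in ℝ^p, then Q(v, F(u,v), ∂_v F(u,v), ..., ∂_v^n F(u,v)) = 0 for all (u,v) ∈ Ω. -/

import Mathlib

open MeasureTheory Metric Set Filter Topology


lemma fderiv_eq_zero_of_density {E F : Type*} [NormedAddCommGroup E] [NormedSpace ℝ E]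
    [MeasurableSpace E] [BorelSpace E] [FiniteDimensional ℝ E]
    [NormedAddCommGroup F] [NormedSpace ℝ F]
    (μ : Measure E) [μ.IsAddHaarMeasure]
    {f : E → F} {s N : Set E} {x : E} {L : E →L[ℝ] F}
    (hN : μ N = 0) (hf0 : ∀ z ∈ s \ N, f z = 0) (hxs : x ∈ s \ N)
    (hx : Tendsto (fun r => μ (s ∩ closedBall x r) / μ (closedBall x r)) (𝓝[>] 0) (𝓝 1))
    (hf : HasFDerivAt f L x) : L = 0 := by
  ext e
  simp only [ContinuousLinearMap.zero_apply]
  have hC : (0:ℝ) < ‖e‖ + 1 + ‖L‖ := by positivity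
  set C : ℝ := ‖e‖ + 1 + ‖L‖ with hCdef
  have key : ∀ ε : ℝ, 0 < ε → ε < 1 → ‖L e‖ ≤ ε * C := by
    intro ε hε hε1
    set d := Module.finrank ℝ E with hd
    have hepos : (0:ℝ) < ‖e‖ + 1 := by positivity
    set θ : ℝ := (ε / (‖e‖ + 1)) ^ d with hθdef
    have hθpos : 0 < θ := by positivity
    have hθ1 : θ ≤ 1 := by
      have h1 : ε / (‖e‖ + 1) ≤ 1 := by
        rw [div_le_one hepos]
        nlinarith [norm_nonneg e]
      exact pow_le_one₀ (by positivity) h1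
    -- little-o property
    have hlo := (hasFDerivAt_iff_isLittleO_nhds_zero.mp hf).def hε
    obtain ⟨δ₁, hδ₁pos, hδ₁⟩ := Metric.eventually_nhds_iff.mp hlo
    -- density property
    set a : ENNReal := ENNReal.ofReal (1 - θ/2) with hadef
    have ha1 : a < 1 := by
      rw [hadef]
      calc ENNReal.ofReal (1 - θ/2) < ENNReal.ofReal 1 := by
            exact (ENNReal.ofReal_lt_ofReal_iff_of_nonneg (by linarith)).mpr (by linarith)
        _ = 1 := ENNReal.ofReal_one
    have hev : ∀ᶠ r in 𝓝[>] (0:ℝ),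
        a < μ (s ∩ closedBall x r) / μ (closedBall x r) :=
      hx.eventually (eventually_gt_nhds ha1)
    obtain ⟨r₀, hr₀, hball⟩ := mem_nhdsGT_iff_exists_Ioc_subset.mp hev
    have hr₀pos : 0 < r₀ := hr₀
    -- choose t
    set t : ℝ := min δ₁ r₀ / (2 * (‖e‖ + 1)) with htdef
    have htpos : 0 < t := by
      apply div_pos (lt_min hδ₁pos hr₀pos); positivity
    set R : ℝ := (‖e‖ + 1) * t with hRdef
    have hRpos : 0 < R := by positivity
    have hRval : R = min δ₁ r₀ / 2 := by
      rw [hRdef, htdef]; field_simp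
    have hmin1 : min δ₁ r₀ ≤ δ₁ := min_le_left _ _
    have hmin2 : min δ₁ r₀ ≤ r₀ := min_le_right _ _
    have hRr₀ : R ≤ r₀ := by rw [hRval]; linarith
    have hRδ₁ : R < δ₁ := by rw [hRval]; linarith
    have hratio := hball ⟨hRpos, hRr₀⟩
    -- find a point of s \ N near x + t e
    have hexists : ∃ z ∈ s \ N, z ∈ closedBall (x + t • e) (ε * t) := by
      by_contra hcon
      push_neg at hcon
      have hsub : s ∩ closedBall (x + t • e) (ε * t) ⊆ N := by
        intro z hz
        by_contra hzN
        exact hcon z ⟨hz.1, hzN⟩ hz.2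
      have hB'sub : closedBall (x + t • e) (ε * t) ⊆ closedBall x R := by
        intro y hy
        rw [mem_closedBall] at hy ⊢
        have h1 : dist y x ≤ dist y (x + t • e) + dist (x + t • e) x := dist_triangle _ _ _
        have h2 : dist (x + t • e) x = t * ‖e‖ := by
          rw [dist_eq_norm]
          simp [norm_smul, abs_of_pos htpos]
        nlinarith [norm_nonneg e]
      -- measure estimate
      have hmono : μ (s ∩ closedBall x R) ≤ μ (closedBall x R \ closedBall (x + t • e) (ε * t)) := by
        have : s ∩ closedBall x R ⊆ (closedBall x R \ closedBall (x + t • e) (ε * t)) ∪ N := by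
          intro z hz
          by_cases hzB : z ∈ closedBall (x + t • e) (ε * t)
          · exact Or.inr (hsub ⟨hz.1, hzB⟩)
          · exact Or.inl ⟨hz.2, hzB⟩
        calc μ (s ∩ closedBall x R) ≤ μ ((closedBall x R \ closedBall (x + t • e) (ε * t)) ∪ N) :=
              measure_mono this
          _ ≤ μ (closedBall x R \ closedBall (x + t • e) (ε * t)) + μ N := measure_union_le _ _
          _ = μ (closedBall x R \ closedBall (x + t • e) (ε * t)) := by rw [hN, add_zero]
      have hdiff : μ (closedBall x R \ closedBall (x + t • e) (ε * t))
          = μ (closedBall x R) - μ (closedBall (x + t • e) (ε * t)) :=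
        measure_diff hB'sub measurableSet_closedBall.nullMeasurableSet
          measure_closedBall_lt_top.ne
      set K := μ (ball (0:E) 1) with hK
      have hcB : μ (closedBall x R) = ENNReal.ofReal (R ^ d) * K :=
        Measure.addHaar_closedBall μ x hRpos.le
      have hB' : μ (closedBall (x + t • e) (ε * t)) = ENNReal.ofReal ((ε * t) ^ d) * K :=
        Measure.addHaar_closedBall μ _ (by positivity)
      have hle : μ (s ∩ closedBall x R) ≤ a * μ (closedBall x R) := by
        rw [hcB]
        calc μ (s ∩ closedBall x R)
            ≤ μ (closedBall x R) - μ (closedBall (x + t • e) (ε * t)) := hmono.trans hdiff.le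
          _ = ENNReal.ofReal (R ^ d) * K - ENNReal.ofReal ((ε * t) ^ d) * K := by rw [hcB, hB']
          _ = (ENNReal.ofReal (R ^ d) - ENNReal.ofReal ((ε * t) ^ d)) * K :=
              (ENNReal.sub_mul (fun _ _ => measure_ball_lt_top.ne)).symm
          _ = ENNReal.ofReal (R ^ d - (ε * t) ^ d) * K := by
              rw [ENNReal.ofReal_sub _ (by positivity)]
          _ ≤ a * (ENNReal.ofReal (R ^ d) * K) := by
              rw [hadef, ← mul_assoc, ← ENNReal.ofReal_mul (by linarith)]
              apply mul_le_mul_left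
              apply ENNReal.ofReal_le_ofReal
              have hθR : θ / 2 * R ^ d ≤ (ε * t) ^ d := by
                have h1 : θ * R ^ d = ε ^ d * t ^ d := by
                  rw [hθdef, hRdef, div_pow, mul_pow]
                  field_simp
                have h2 : (ε * t) ^ d = ε ^ d * t ^ d := mul_pow _ _ _
                nlinarith [pow_pos (mul_pos hε htpos) d]
              nlinarith
      have : μ (s ∩ closedBall x R) / μ (closedBall x R) ≤ a :=
        ENNReal.div_le_of_le_mul hle
      exact absurd hratio (not_lt.mpr this)
    obtain ⟨z, hzs, hzB⟩ := hexists
    rw [mem_closedBall, dist_eq_norm] at hzB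
    -- derivative estimate
    have hznorm : ‖z - x‖ ≤ R := by
      have : z - x = (z - (x + t • e)) + t • e := by abel
      rw [this]
      calc ‖(z - (x + t • e)) + t • e‖ ≤ ‖z - (x + t • e)‖ + ‖t • e‖ := norm_add_le _ _
        _ ≤ ε * t + t * ‖e‖ := by
            rw [norm_smul, Real.norm_eq_abs, abs_of_pos htpos]; linarith
        _ ≤ R := by rw [hRdef]; nlinarith
    have hest := hδ₁ (y := z - x) (by
      rw [dist_zero_right]
      exact lt_of_le_of_lt hznorm hRδ₁)
    rw [add_sub_cancel, hf0 z hzs, hf0 x hxs] at hest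
    have hest2 : ‖L (z - x)‖ ≤ ε * ‖z - x‖ := by
      rw [L.map_sub, norm_sub_rev]; simpa using hest
    -- hest : ‖L (z - x)‖ ≤ ε * ‖z - x‖  (up to neg)
    have hLte : ‖L (t • e)‖ ≤ ε * R + ‖L‖ * (ε * t) := by
      have h1 : L (t • e) = L (z - x) + L (t • e - (z - x)) := by
        rw [← map_add]; congr 1; abel
      rw [h1]
      calc ‖L (z - x) + L (t • e - (z - x))‖ ≤ ‖L (z - x)‖ + ‖L (t • e - (z - x))‖ :=
            norm_add_le _ _
        _ ≤ ε * ‖z - x‖ + ‖L‖ * ‖t • e - (z - x)‖ := add_le_add hest2 (L.le_opNorm _)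
        _ ≤ ε * R + ‖L‖ * (ε * t) := by
            have h2 : ‖t • e - (z - x)‖ = ‖z - (x + t • e)‖ := by
              rw [← norm_neg]; congr 1; abel
            rw [h2]
            exact add_le_add (mul_le_mul_of_nonneg_left hznorm hε.le)
              (mul_le_mul_of_nonneg_left hzB (norm_nonneg (L : _ →L[ℝ] _)))
    have hLsm : ‖L (t • e)‖ = t * ‖L e‖ := by
      rw [L.map_smul, norm_smul, Real.norm_eq_abs, abs_of_pos htpos]
    rw [hLsm, hRdef] at hLte
    have heq : ε * ((‖e‖ + 1) * t) + ‖L‖ * (ε * t) = t * (ε * C) := by rw [hCdef]; ring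
    have : t * ‖L e‖ ≤ t * (ε * C) := by linarith
    exact le_of_mul_le_mul_left this htpos
  -- conclude L e = 0
  by_contra hne
  have hpos : 0 < ‖L e‖ := norm_pos_iff.mpr hne
  set ε : ℝ := min (1/2) (‖L e‖ / (2 * C)) with hεdef
  have hεpos : 0 < ε := lt_min (by norm_num) (by positivity)
  have hε1 : ε < 1 := lt_of_le_of_lt (min_le_left _ _) (by norm_num)
  have := key ε hεpos hε1
  have h2 : ε * C ≤ ‖L e‖ / 2 := by
    calc ε * C ≤ (‖L e‖ / (2 * C)) * C := by
          apply mul_le_mul_of_nonneg_right (min_le_right _ _) hC.le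
      _ = ‖L e‖ / 2 := by field_simp
  have h3 : ‖L e‖ ≤ ‖L e‖ / 2 := le_trans this h2
  linarith


lemma slice_deriv_analytic {p : ℕ} {Ω : Set ((Fin p → ℝ) × ℝ)} (hΩo : IsOpen Ω)
    {h : (Fin p → ℝ) × ℝ → ℝ} (hh : AnalyticOnNhd ℝ h Ω) :
    AnalyticOnNhd ℝ (fun x => deriv (fun w => h (x.1, w)) x.2) Ω := by
  have h1 : AnalyticOnNhd ℝ (fun x => fderiv ℝ h x ((0 : Fin p → ℝ), (1:ℝ))) Ω :=
    (ContinuousLinearMap.apply ℝ ℝ ((0 : Fin p → ℝ), (1:ℝ))).comp_analyticOnNhd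
      (hh.fderiv_of_isOpen hΩo)
  intro x hx
  have heq : ∀ᶠ y in 𝓝 x, fderiv ℝ h y ((0 : Fin p → ℝ), (1:ℝ))
      = deriv (fun w => h (y.1, w)) y.2 := by
    filter_upwards [hΩo.mem_nhds hx] with y hy
    have hdiff : HasFDerivAt h (fderiv ℝ h y) y := (hh y hy).differentiableAt.hasFDerivAt
    have hcurve : HasDerivAt (fun w => ((y.1 : Fin p → ℝ), w)) ((0 : Fin p → ℝ), (1:ℝ)) y.2 :=
      (hasDerivAt_const y.2 y.1).prodMk (hasDerivAt_id y.2)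
    have := (hdiff.comp_hasDerivAt y.2 hcurve).deriv
    simpa [Function.comp_def] using this.symm
  exact (h1 x hx).congr heq

lemma slice_iteratedDeriv_analytic {p : ℕ} {Ω : Set ((Fin p → ℝ) × ℝ)} (hΩo : IsOpen Ω)
    {F : (Fin p → ℝ) × ℝ → ℝ} (hF : AnalyticOnNhd ℝ F Ω) (k : ℕ) :
    AnalyticOnNhd ℝ (fun x => iteratedDeriv k (fun w => F (x.1, w)) x.2) Ω := by
  induction k with
  | zero => simpa [iteratedDeriv_zero] using hF
  | succ k ih =>
    have := slice_deriv_analytic hΩo ih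
    simpa [iteratedDeriv_succ] using this

lemma aeval_analytic {p n : ℕ} {Ω : Set ((Fin p → ℝ) × ℝ)} (hΩo : IsOpen Ω)
    {F : (Fin p → ℝ) × ℝ → ℝ} (hF : AnalyticOnNhd ℝ F Ω) (Q : MvPolynomial (Fin (n + 2)) ℤ) :
    AnalyticOnNhd ℝ (fun x =>
      MvPolynomial.aeval (fun i : Fin (n + 2) =>
        if (i : ℕ) = 0 then x.2
        else iteratedDeriv ((i : ℕ) - 1) (fun w => F (x.1, w)) x.2) Q) Ω := by
  have hσ : ∀ i : Fin (n + 2), AnalyticOnNhd ℝ (fun x : (Fin p → ℝ) × ℝ =>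
      if (i : ℕ) = 0 then x.2
      else iteratedDeriv ((i : ℕ) - 1) (fun w => F (x.1, w)) x.2) Ω := by
    intro i
    by_cases hi : (i : ℕ) = 0
    · simp only [hi, if_true]
      exact analyticOnNhd_snd
    · simp only [hi, if_false]
      exact slice_iteratedDeriv_analytic hΩo hF _
  induction Q using MvPolynomial.induction_on with
  | C a => simpa using analyticOnNhd_const
  | add q r hq hr => simpa [map_add, Pi.add_def] using hq.add hr
  | mul_X q i hq => simpa [map_mul] using hq.mul (hσ i)

/-- If the set `Ω'(Q)` of parameters `u` for which `F(u,·)` satisfies the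
integer-coefficient differential polynomial equation `Q` on all admissible `v`
has positive measure, then the relation holds on all of the connected open
set `Ω`. -/
theorem alternative_lemma_positive_measure
    (p n : ℕ) (Ω : Set ((Fin p → ℝ) × ℝ)) (hΩo : IsOpen Ω) (hΩc : IsConnected Ω)
    (F : (Fin p → ℝ) × ℝ → ℝ) (hF : AnalyticOnNhd ℝ F Ω)
    (Q : MvPolynomial (Fin (n + 2)) ℤ)
    (hpos : 0 < volume {u : Fin p → ℝ |
      (∃ v : ℝ, (u, v) ∈ Ω) ∧ ∀ v : ℝ, (u, v) ∈ Ω →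
        MvPolynomial.aeval
          (fun i : Fin (n + 2) =>
            if (i : ℕ) = 0 then v
            else iteratedDeriv ((i : ℕ) - 1) (fun w => F (u, w)) v) Q = 0}) :
    ∀ u v, (u, v) ∈ Ω →
      MvPolynomial.aeval
        (fun i : Fin (n + 2) =>
          if (i : ℕ) = 0 then v
          else iteratedDeriv ((i : ℕ) - 1) (fun w => F (u, w)) v) Q = 0 := by
  classical
  set G : (Fin p → ℝ) × ℝ → ℝ := fun x =>
    MvPolynomial.aeval (fun i : Fin (n + 2) =>
      if (i : ℕ) = 0 then x.2
      else iteratedDeriv ((i : ℕ) - 1) (fun w => F (x.1, w)) x.2) Q with hGdef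
  have hG : AnalyticOnNhd ℝ G Ω := aeval_analytic hΩo hF Q
  set Z : Set ((Fin p → ℝ) × ℝ) := Ω ∩ G ⁻¹' {0} with hZdef
  have hU : IsOpen (Ω ∩ G ⁻¹' ({0}ᶜ)) :=
    hG.continuousOn.isOpen_inter_preimage hΩo isOpen_compl_singleton
  have hZmeas : MeasurableSet Z := by
    have hZeq : Z = Ω \ (Ω ∩ G ⁻¹' ({0}ᶜ)) := by
      ext x
      simp only [hZdef, Set.mem_inter_iff, Set.mem_preimage, Set.mem_singleton_iff,
        Set.mem_diff, Set.mem_compl_iff]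
      tauto
    rw [hZeq]
    exact hΩo.measurableSet.diff hU.measurableSet
  -- Z has positive measure
  have hZpos : volume Z ≠ 0 := by
    intro h0
    rw [Measure.volume_eq_prod, Measure.prod_apply hZmeas] at h0
    have hae := (lintegral_eq_zero_iff (measurable_measure_prodMk_left hZmeas)).mp h0
    have hnull : volume {u : Fin p → ℝ | volume (Prod.mk u ⁻¹' Z) ≠ 0} = 0 := by
      simpa [Filter.EventuallyEq, ae_iff] using hae
    have hsub : {u : Fin p → ℝ |
        (∃ v : ℝ, (u, v) ∈ Ω) ∧ ∀ v : ℝ, (u, v) ∈ Ω →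
        MvPolynomial.aeval
          (fun i : Fin (n + 2) =>
            if (i : ℕ) = 0 then v
            else iteratedDeriv ((i : ℕ) - 1) (fun w => F (u, w)) v) Q = 0} ⊆
        {u : Fin p → ℝ | volume (Prod.mk u ⁻¹' Z) ≠ 0} := by
      rintro u ⟨⟨v₀, hv₀⟩, hall⟩
      have hopen : IsOpen {v : ℝ | (u, v) ∈ Ω} := hΩo.preimage (Continuous.prodMk_right u)
      have hsub2 : {v : ℝ | (u, v) ∈ Ω} ⊆ Prod.mk u ⁻¹' Z := fun v hv => ⟨hv, hall v hv⟩
      exact ((hopen.measure_pos volume ⟨v₀, hv₀⟩).trans_le (measure_mono hsub2)).ne'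
    exact hpos.ne' (measure_mono_null hsub hnull)
  -- Haar measure instance
  haveI hHaar : (volume : Measure ((Fin p → ℝ) × ℝ)).IsAddHaarMeasure := by
    rw [Measure.volume_eq_prod]; infer_instance
  -- density points
  have hae2 := Besicovitch.ae_tendsto_measure_inter_div_of_measurableSet
    (volume : Measure ((Fin p → ℝ) × ℝ)) hZmeas
  set N : Set ((Fin p → ℝ) × ℝ) := {x | ¬ Tendsto
      (fun r => volume (Z ∩ closedBall x r) / volume (closedBall x r)) (𝓝[>] 0)
      (𝓝 (Z.indicator 1 x))} with hNdef
  have hNnull : volume N = 0 := hae2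
  have htend : ∀ x ∈ Z \ N, Tendsto
      (fun r => volume (Z ∩ closedBall x r) / volume (closedBall x r)) (𝓝[>] 0) (𝓝 1) := by
    rintro x ⟨hxZ, hxN⟩
    have h1 := not_not.mp hxN
    rwa [Set.indicator_of_mem hxZ, Pi.one_apply] at h1
  -- all iterated derivatives vanish on Z \ N
  have hind : ∀ k : ℕ, ∀ x ∈ Z \ N, iteratedFDeriv ℝ k G x = 0 := by
    intro k
    induction k with
    | zero =>
      intro x hx
      ext m
      simp only [iteratedFDeriv_zero_apply, ContinuousMultilinearMap.zero_apply]
      exact hx.1.2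
    | succ k ih =>
      intro x hx
      have hxΩ : x ∈ Ω := hx.1.1
      have hfa : AnalyticOnNhd ℝ (iteratedFDeriv ℝ k G) Ω := hG.iteratedFDeriv_of_isOpen hΩo k
      have hdiff : HasFDerivAt (iteratedFDeriv ℝ k G) (fderiv ℝ (iteratedFDeriv ℝ k G) x) x :=
        (hfa x hxΩ).differentiableAt.hasFDerivAt
      have hL0 := fderiv_eq_zero_of_density volume hNnull ih hx (htend x hx) hdiff
      ext m
      rw [iteratedFDeriv_succ_apply_left, hL0]
      simp
  -- get a point
  have hgood : (Z \ N).Nonempty := by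
    rw [Set.nonempty_iff_ne_empty]
    intro hempty
    have hsub3 : Z ⊆ N := by
      intro x hx
      by_contra hxN
      exact absurd hempty (Set.nonempty_iff_ne_empty.mp ⟨x, hx, hxN⟩)
    exact hZpos (measure_mono_null hsub3 hNnull)
  obtain ⟨x₀, hx₀⟩ := hgood
  -- G vanishes near x₀
  obtain ⟨ps, r, hball⟩ := hG x₀ hx₀.1.1
  have hev0 : G =ᶠ[𝓝 x₀] 0 := by
    filter_upwards [EMetric.ball_mem_nhds x₀ hball.r_pos] with y hy
    have hy' : y - x₀ ∈ EMetric.ball (0 : (Fin p → ℝ) × ℝ) r := by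
      show edist (y - x₀) 0 < r
      simpa [edist_dist, dist_eq_norm] using hy
    have hsum := hball.hasSum_iteratedFDeriv hy'
    have hzero : ∀ m : ℕ, ((Nat.factorial m : ℕ) : ℝ)⁻¹ • iteratedFDeriv ℝ m G x₀ (fun _ => y - x₀) = 0 := by
      intro m
      rw [hind m x₀ hx₀]
      simp
    have hsum0 : HasSum (fun m : ℕ => (0 : ℝ)) (G (x₀ + (y - x₀))) := by
      refine HasSum.congr_fun hsum ?_
      intro m
      exact (hzero m).symm
    have := hsum0.unique hasSum_zero
    simpa using this
  have heqon := hG.eqOn_zero_of_preconnected_of_eventuallyEq_zero hΩc.isPreconnected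
    hx₀.1.1 hev0
  intro u v huv
  have := heqon huv
  simpa [hGdef] using this
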